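/- Let S₁ ⟂ S₂ be subspaces of ℂⁿ, λ > 0, and R Hermitian with P_{S₁} R = 0, P_{S₂} R = 0 and ‖R‖ < λ. If there exist nonzero positive semidefinite companion matrices P₁, P₂ with ran(P₁) ⊆ S₁ and ran(P₂) ⊆ S₂, then M = λ P_{S₁} − λ P_{S₂} + R satisfies ‖M‖ ≤ ‖M + D‖ for all real diagonal D, and ‖M‖ = λ. -/

import Mathlib

open scoped ComplexOrder

noncomputable def opNorm {n : Type*} [Fintype n] [DecidableEq n] (M : Matrix n n ℂ) : ℝ :=
  ‖(Matrix.toEuclideanCLM (𝕜 := ℂ) M : EuclideanSpace ℂ n →L[ℂ] EuclideanSpace ℂ n)‖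

/-- `M` is minimal: its operator norm is ≤ that of `M + D` for every real diagonal `D`. -/
def IsMinimal {n : Type*} [Fintype n] [DecidableEq n] (M : Matrix n n ℂ) : Prop :=
  ∀ d : n → ℝ, opNorm M ≤ opNorm (M + Matrix.diagonal fun i => (d i : ℂ))

/-- `P` is the orthogonal projection matrix onto the subspace `S` of `ℂⁿ`
(with respect to the standard inner product). -/
def IsOrthProjOn {n : Type*} [Fintype n] [DecidableEq n]
    (P : Matrix n n ℂ) (S : Submodule ℂ (n → ℂ)) : Prop :=
  P.IsHermitian ∧ P * P = P ∧ LinearMap.range P.mulVecLin = S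

/-- Two subspaces of `ℂⁿ` are orthogonal for the standard inner product. -/
def OrthSubspaces {n : Type*} [Fintype n]
    (S₁ S₂ : Submodule ℂ (n → ℂ)) : Prop :=
  ∀ x ∈ S₁, ∀ y ∈ S₂, dotProduct (star x) y = 0

namespace Stmt7Aux

open Matrix
open scoped InnerProductSpace

variable {n : Type*} [Fintype n] [DecidableEq n]

lemma ext_mulVec {A B : Matrix n n ℂ} (h : ∀ x, A.mulVec x = B.mulVec x) : A = B := by
  ext i j
  simpa using congrFun (h (Pi.single j 1)) i

lemma quadratic (A : Matrix n n ℂ) (v : n → ℂ) :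
    ⟪(WithLp.equiv 2 (n → ℂ)).symm v,
      Matrix.toEuclideanCLM (𝕜 := ℂ) A ((WithLp.equiv 2 (n → ℂ)).symm v)⟫_ℂ
      = dotProduct (star v) (A.mulVec v) := by
  rw [WithLp.equiv_symm_apply, Matrix.toEuclideanCLM_toLp, EuclideanSpace.inner_toLp_toLp,
    dotProduct_comm]

lemma norm_sq_eq (v : n → ℂ) :
    ‖(WithLp.equiv 2 (n → ℂ)).symm v‖ ^ 2 = (dotProduct (star v) v).re := by
  rw [← inner_self_eq_norm_sq (𝕜 := ℂ), WithLp.equiv_symm_apply, EuclideanSpace.inner_toLp_toLp,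
    dotProduct_comm]
  rfl

lemma abs_trace_mul_le (A P : Matrix n n ℂ) (hP : P.PosSemidef) :
    ‖(A * P).trace‖ ≤ opNorm A * P.trace.re := by
  obtain ⟨B, hB, hBB⟩ : ∃ B : Matrix n n ℂ, B.IsHermitian ∧ B * B = P :=
    by
      open scoped MatrixOrder in
      exact ⟨CFC.sqrt P, (Matrix.nonneg_iff_posSemidef.mp (CFC.sqrt_nonneg P)).1,
        CFC.sqrt_mul_sqrt_self P hP.nonneg⟩
  have key : ∀ i, (B * A * B) i i
      = dotProduct (star (star (B i))) (A.mulVec (star (B i))) := by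
    intro i
    simp only [Matrix.mul_apply, Matrix.mulVec, dotProduct, star_star, Pi.star_apply,
      Finset.sum_mul, Finset.mul_sum]
    rw [Finset.sum_comm]
    refine Finset.sum_congr rfl fun j _ => Finset.sum_congr rfl fun k _ => ?_
    rw [hB.apply k i]
    ring
  have hdiag : ∀ i, ‖(B * A * B) i i‖ ≤ opNorm A * (P i i).re := by
    intro i
    have h2 : ‖(WithLp.equiv 2 (n → ℂ)).symm (star (B i))‖ ^ 2 = (P i i).re := by
      rw [norm_sq_eq]
      congr 1
      rw [star_star, ← hBB]
      simp only [Matrix.mul_apply, dotProduct, Pi.star_apply]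
      exact Finset.sum_congr rfl fun j _ => by rw [hB.apply j i]
    set w : EuclideanSpace ℂ n := (WithLp.equiv 2 (n → ℂ)).symm (star (B i)) with hw
    calc ‖(B * A * B) i i‖
        = ‖⟪w, Matrix.toEuclideanCLM (𝕜 := ℂ) A w⟫_ℂ‖ := by
          rw [key i, ← quadratic]
      _ ≤ ‖w‖ * ‖Matrix.toEuclideanCLM (𝕜 := ℂ) A w‖ := norm_inner_le_norm _ _
      _ ≤ ‖w‖ * (‖Matrix.toEuclideanCLM (𝕜 := ℂ) A‖ * ‖w‖) :=
          mul_le_mul_of_nonneg_left (ContinuousLinearMap.le_opNorm _ _) (norm_nonneg w)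
      _ = ‖Matrix.toEuclideanCLM (𝕜 := ℂ) A‖ * ‖w‖ ^ 2 := by ring
      _ = opNorm A * (P i i).re := by rw [h2]; rfl
  have h3 : (A * P).trace = ∑ i, (B * A * B) i i := by
    rw [← hBB, ← Matrix.mul_assoc, Matrix.trace_mul_cycle]
    simp [Matrix.trace, Matrix.diag]
  calc ‖(A * P).trace‖ = ‖∑ i, (B * A * B) i i‖ := by rw [h3]
    _ ≤ ∑ i, ‖(B * A * B) i i‖ := norm_sum_le _ _
    _ ≤ ∑ i, opNorm A * (P i i).re := Finset.sum_le_sum fun i _ => hdiag i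
    _ = opNorm A * P.trace.re := by
        rw [← Finset.mul_sum]
        congr 1
        simp [Matrix.trace, Matrix.diag, Complex.re_sum]

lemma trace_re_pos {P : Matrix n n ℂ} (hP : P.PosSemidef) (h0 : P ≠ 0) :
    0 < P.trace.re := by
  obtain ⟨B, hB, hBB⟩ : ∃ B : Matrix n n ℂ, B.IsHermitian ∧ B * B = P :=
    by
      open scoped MatrixOrder in
      exact ⟨CFC.sqrt P, (Matrix.nonneg_iff_posSemidef.mp (CFC.sqrt_nonneg P)).1,
        CFC.sqrt_mul_sqrt_self P hP.nonneg⟩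
  have hform : P.trace.re = ∑ i, ∑ j, Complex.normSq (B i j) := by
    rw [← hBB]
    simp only [Matrix.trace, Matrix.diag, Matrix.mul_apply, Complex.re_sum]
    refine Finset.sum_congr rfl fun i _ => Finset.sum_congr rfl fun j _ => ?_
    rw [← hB.apply j i, Complex.star_def, Complex.mul_conj]
    simp
  refine lt_of_le_of_ne (by
    rw [hform]
    exact Finset.sum_nonneg fun i _ => Finset.sum_nonneg fun j _ => Complex.normSq_nonneg _) fun h => h0 ?_
  have hzero : ∑ i, ∑ j, Complex.normSq (B i j) = 0 := by rw [← hform, ← h]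
  have hBzero : B = 0 := by
    ext i j
    have h1 : ∀ i ∈ Finset.univ, (0:ℝ) ≤ ∑ j, Complex.normSq (B i j) := fun i _ => Finset.sum_nonneg fun j _ => Complex.normSq_nonneg _
    have h2 := (Finset.sum_eq_zero_iff_of_nonneg h1).mp hzero i (Finset.mem_univ i)
    have h3 : ∀ j ∈ Finset.univ, (0:ℝ) ≤ Complex.normSq (B i j) := fun j _ => Complex.normSq_nonneg _
    have h4 := (Finset.sum_eq_zero_iff_of_nonneg h3).mp h2 j (Finset.mem_univ j)
    simpa using Complex.normSq_eq_zero.mp h4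
  rw [← hBB, hBzero, Matrix.mul_zero]

end Stmt7Aux

open Matrix Stmt7Aux
open scoped InnerProductSpace

set_option maxHeartbeats 1000000 in
theorem stmt7 {n : Type*} [Fintype n] [DecidableEq n]
    (S₁ S₂ : Submodule ℂ (n → ℂ)) (horth : OrthSubspaces S₁ S₂)
    (lam : ℝ) (hlam : 0 < lam)
    (PS₁ PS₂ R P₁ P₂ : Matrix n n ℂ)
    (hPS₁ : IsOrthProjOn PS₁ S₁) (hPS₂ : IsOrthProjOn PS₂ S₂)
    (hR : R.IsHermitian) (hR₁ : PS₁ * R = 0) (hR₂ : PS₂ * R = 0)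
    (hRnorm : opNorm R < lam)
    (hP₁ : P₁.PosSemidef) (hP₂ : P₂.PosSemidef) (hP₁0 : P₁ ≠ 0) (hP₂0 : P₂ ≠ 0)
    (hran₁ : ∀ x, P₁.mulVec x ∈ S₁) (hran₂ : ∀ x, P₂.mulVec x ∈ S₂)
    (hcomp₁ : P₁ * P₂ = 0) (hcomp₂ : ∀ i, P₁ i i = P₂ i i) :
    IsMinimal ((lam : ℂ) • PS₁ - (lam : ℂ) • PS₂ + R) ∧
      opNorm ((lam : ℂ) • PS₁ - (lam : ℂ) • PS₂ + R) = lam := by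
  obtain ⟨hH₁, hI₁, hRan₁⟩ := hPS₁
  obtain ⟨hH₂, hI₂, hRan₂⟩ := hPS₂
  set M : Matrix n n ℂ := (lam : ℂ) • PS₁ - (lam : ℂ) • PS₂ + R with hM_def
  -- basic facts about the projections
  have hmem₁ : ∀ x, PS₁ *ᵥ x ∈ S₁ := fun x => by
    rw [← hRan₁]; exact ⟨x, rfl⟩
  have hmem₂ : ∀ x, PS₂ *ᵥ x ∈ S₂ := fun x => by
    rw [← hRan₂]; exact ⟨x, rfl⟩
  have hfix₁ : ∀ x ∈ S₁, PS₁ *ᵥ x = x := by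
    intro x hx
    rw [← hRan₁] at hx
    obtain ⟨w, hw⟩ := hx
    rw [Matrix.mulVecLin_apply] at hw
    rw [← hw, Matrix.mulVec_mulVec, hI₁]
  have hfix₂ : ∀ x ∈ S₂, PS₂ *ᵥ x = x := by
    intro x hx
    rw [← hRan₂] at hx
    obtain ⟨w, hw⟩ := hx
    rw [Matrix.mulVecLin_apply] at hw
    rw [← hw, Matrix.mulVec_mulVec, hI₂]
  have hkill₂₁ : ∀ x ∈ S₁, PS₂ *ᵥ x = 0 := by
    intro x hx
    have hv : PS₂ *ᵥ x ∈ S₂ := hmem₂ x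
    have h1 : star x ⬝ᵥ (PS₂ *ᵥ x) = 0 := horth x hx _ hv
    have h2 : star (PS₂ *ᵥ x) ⬝ᵥ (PS₂ *ᵥ x) = 0 := by
      calc star (PS₂ *ᵥ x) ⬝ᵥ (PS₂ *ᵥ x)
          = (star x ᵥ* PS₂ᴴ) ⬝ᵥ (PS₂ *ᵥ x) := by rw [Matrix.star_mulVec]
        _ = star x ⬝ᵥ (PS₂ᴴ *ᵥ (PS₂ *ᵥ x)) := (Matrix.dotProduct_mulVec _ _ _).symm
        _ = star x ⬝ᵥ (PS₂ *ᵥ x) := by rw [hH₂.eq, hfix₂ _ hv]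
        _ = 0 := h1
    exact dotProduct_star_self_eq_zero.mp h2
  have hkill₁₂ : ∀ y ∈ S₂, PS₁ *ᵥ y = 0 := by
    intro y hy
    have hv : PS₁ *ᵥ y ∈ S₁ := hmem₁ y
    have h1 : star (PS₁ *ᵥ y) ⬝ᵥ y = 0 := horth _ hv y hy
    have h1' : star y ⬝ᵥ (PS₁ *ᵥ y) = 0 := by
      have := congrArg star h1
      rwa [Matrix.star_dotProduct, star_star, star_zero] at this
    have h2 : star (PS₁ *ᵥ y) ⬝ᵥ (PS₁ *ᵥ y) = 0 := by
      calc star (PS₁ *ᵥ y) ⬝ᵥ (PS₁ *ᵥ y)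
          = (star y ᵥ* PS₁ᴴ) ⬝ᵥ (PS₁ *ᵥ y) := by rw [Matrix.star_mulVec]
        _ = star y ⬝ᵥ (PS₁ᴴ *ᵥ (PS₁ *ᵥ y)) := (Matrix.dotProduct_mulVec _ _ _).symm
        _ = star y ⬝ᵥ (PS₁ *ᵥ y) := by rw [hH₁.eq, hfix₁ _ hv]
        _ = 0 := h1'
    exact dotProduct_star_self_eq_zero.mp h2
  -- matrix identities
  have h12 : PS₁ * PS₂ = 0 := ext_mulVec fun x => by
    rw [← Matrix.mulVec_mulVec, hkill₁₂ _ (hmem₂ x), Matrix.zero_mulVec]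
  have h21 : PS₂ * PS₁ = 0 := ext_mulVec fun x => by
    rw [← Matrix.mulVec_mulVec, hkill₂₁ _ (hmem₁ x), Matrix.zero_mulVec]
  have hP₁fix : PS₁ * P₁ = P₁ := ext_mulVec fun x => by
    rw [← Matrix.mulVec_mulVec, hfix₁ _ (hran₁ x)]
  have hP₂fix : PS₂ * P₂ = P₂ := ext_mulVec fun x => by
    rw [← Matrix.mulVec_mulVec, hfix₂ _ (hran₂ x)]
  have h2P₁ : PS₂ * P₁ = 0 := ext_mulVec fun x => by
    rw [← Matrix.mulVec_mulVec, hkill₂₁ _ (hran₁ x), Matrix.zero_mulVec]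
  have h1P₂ : PS₁ * P₂ = 0 := ext_mulVec fun x => by
    rw [← Matrix.mulVec_mulVec, hkill₁₂ _ (hran₂ x), Matrix.zero_mulVec]
  have hR₁' : R * PS₁ = 0 := by
    have := congrArg Matrix.conjTranspose hR₁
    rwa [Matrix.conjTranspose_mul, hH₁.eq, hR.eq, Matrix.conjTranspose_zero] at this
  have hR₂' : R * PS₂ = 0 := by
    have := congrArg Matrix.conjTranspose hR₂
    rwa [Matrix.conjTranspose_mul, hH₂.eq, hR.eq, Matrix.conjTranspose_zero] at this
  have hRP₁ : R * P₁ = 0 := by rw [← hP₁fix, ← Matrix.mul_assoc, hR₁', Matrix.zero_mul]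
  have hRP₂ : R * P₂ = 0 := by rw [← hP₂fix, ← Matrix.mul_assoc, hR₂', Matrix.zero_mul]
  have hMP₁ : M * P₁ = (lam : ℂ) • P₁ := by
    rw [hM_def, Matrix.add_mul, Matrix.sub_mul, smul_mul_assoc, smul_mul_assoc,
      hP₁fix, h2P₁, hRP₁]
    simp
  have hMP₂ : M * P₂ = (-(lam : ℂ)) • P₂ := by
    rw [hM_def, Matrix.add_mul, Matrix.sub_mul, smul_mul_assoc, smul_mul_assoc,
      hP₂fix, h1P₂, hRP₂]
    simp
  -- upper bound : opNorm M ≤ lam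
  set Q : Matrix n n ℂ := PS₁ + PS₂ with hQ_def
  have hQH : Qᴴ = Q := by rw [hQ_def, Matrix.conjTranspose_add, hH₁.eq, hH₂.eq]
  have hQQ : Q * Q = Q := by
    rw [hQ_def]
    simp [Matrix.add_mul, Matrix.mul_add, hI₁, hI₂, h12, h21]
  have hRQ : R * Q = 0 := by
    rw [hQ_def]
    simp [Matrix.mul_add, hR₁', hR₂']
  have hMH : Mᴴ = M := by
    rw [hM_def]
    simp [Matrix.conjTranspose_add, Matrix.conjTranspose_sub, Matrix.conjTranspose_smul,
      hH₁.eq, hH₂.eq, hR.eq, Complex.star_def, Complex.conj_ofReal]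
  have hMM : M * M = ((lam ^ 2 : ℝ) : ℂ) • Q + R * R := by
    rw [hM_def, hQ_def]
    simp only [Matrix.add_mul, Matrix.mul_add, Matrix.sub_mul, Matrix.mul_sub,
      smul_mul_assoc, mul_smul_comm, hI₁, hI₂, h12, h21, hR₁, hR₂, hR₁', hR₂',
      smul_smul, smul_zero, smul_add, smul_sub]
    push_cast
    module
  set f := Matrix.toEuclideanCLM (𝕜 := ℂ) M with hf_def
  set q := Matrix.toEuclideanCLM (𝕜 := ℂ) Q with hq_def
  set r := Matrix.toEuclideanCLM (𝕜 := ℂ) R with hr_def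
  have hfq : f * f = ((lam ^ 2 : ℝ) : ℂ) • q + r * r := by
    rw [hf_def, hq_def, hr_def, ← _root_.map_mul, hMM, _root_.map_add, _root_.map_smul, _root_.map_mul]
  have hqq : q * q = q := by rw [hq_def, ← _root_.map_mul, hQQ]
  have hrq : r * q = 0 := by rw [hq_def, hr_def, ← _root_.map_mul, hRQ, _root_.map_zero]
  have hqadj : ContinuousLinearMap.adjoint q = q := by
    rw [← ContinuousLinearMap.star_eq_adjoint, hq_def, ← map_star,
      Matrix.star_eq_conjTranspose, hQH]
  have hfadj : ContinuousLinearMap.adjoint f = f := by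
    rw [← ContinuousLinearMap.star_eq_adjoint, hf_def, ← map_star,
      Matrix.star_eq_conjTranspose, hMH]
  have hradj : ContinuousLinearMap.adjoint r = r := by
    rw [← ContinuousLinearMap.star_eq_adjoint, hr_def, ← map_star,
      Matrix.star_eq_conjTranspose, hR.eq]
  have hbound : ∀ x : EuclideanSpace ℂ n, ‖f x‖ ≤ lam * ‖x‖ := by
    intro x
    have hqq' : ∀ y : EuclideanSpace ℂ n, q (q y) = q y := fun y => by
      rw [← ContinuousLinearMap.mul_apply, hqq]
    have hx1 : ⟪f x, f x⟫_ℂ = ⟪x, (f * f) x⟫_ℂ := by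
      have h := ContinuousLinearMap.adjoint_inner_right f x (f x)
      rw [hfadj] at h
      rw [← h, ContinuousLinearMap.mul_apply]
    have hq1 : ⟪x, q x⟫_ℂ = ⟪q x, q x⟫_ℂ := by
      have h := ContinuousLinearMap.adjoint_inner_right q x (q x)
      rw [hqadj] at h
      rw [← h, hqq' x]
    have hr1 : ⟪x, r (r x)⟫_ℂ = ⟪r x, r x⟫_ℂ := by
      have h := ContinuousLinearMap.adjoint_inner_right r x (r x)
      rw [hradj] at h
      rw [← h]
    have expand : ‖f x‖ ^ 2 = lam ^ 2 * ‖q x‖ ^ 2 + ‖r x‖ ^ 2 := by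
      have hC := inner_self_eq_norm_sq_to_K (𝕜 := ℂ) (f x)
      rw [hx1, hfq, ContinuousLinearMap.add_apply, ContinuousLinearMap.smul_apply,
        ContinuousLinearMap.mul_apply, inner_add_right, inner_smul_right, hq1, hr1,
        inner_self_eq_norm_sq_to_K (𝕜 := ℂ), inner_self_eq_norm_sq_to_K (𝕜 := ℂ)] at hC
      have h9 : ((‖f x‖ : ℂ)) ^ 2
          = ((lam ^ 2 : ℝ) : ℂ) * ((‖q x‖ : ℂ)) ^ 2 + ((‖r x‖ : ℂ)) ^ 2 := hC.symm
      exact_mod_cast h9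
    have hrx : ‖r x‖ ≤ lam * ‖x - q x‖ := by
      have hz : r (q x) = 0 := by
        rw [← ContinuousLinearMap.mul_apply, hrq]; rfl
      have h1 : r x = r (x - q x) := by rw [_root_.map_sub, hz, sub_zero]
      rw [h1]
      calc ‖r (x - q x)‖ ≤ ‖r‖ * ‖x - q x‖ := r.le_opNorm _
        _ ≤ lam * ‖x - q x‖ :=
            mul_le_mul_of_nonneg_right hRnorm.le (norm_nonneg _)
    have hpyth : ‖q x‖ ^ 2 + ‖x - q x‖ ^ 2 = ‖x‖ ^ 2 := by
      have hinner : ⟪q x, x - q x⟫_ℂ = 0 := by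
        rw [inner_sub_right]
        have hL := ContinuousLinearMap.adjoint_inner_left q x x
        rw [hqadj] at hL
        have h4 := ContinuousLinearMap.adjoint_inner_right q x (q x)
        rw [hqadj] at h4
        rw [hqq' x] at h4
        rw [hL, h4, sub_self]
      have hx2 : q x + (x - q x) = x := by abel
      have := norm_add_sq (𝕜 := ℂ) (q x) (x - q x)
      rw [hx2, hinner] at this
      simp at this
      linarith
    have hsq : ‖f x‖ ^ 2 ≤ (lam * ‖x‖) ^ 2 := by
      have h5 : ‖r x‖ ^ 2 ≤ (lam * ‖x - q x‖) ^ 2 :=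
        pow_le_pow_left₀ (norm_nonneg _) hrx 2
      nlinarith [norm_nonneg (q x), norm_nonneg (x - q x)]
    calc ‖f x‖ = Real.sqrt (‖f x‖ ^ 2) := (Real.sqrt_sq (norm_nonneg _)).symm
      _ ≤ Real.sqrt ((lam * ‖x‖) ^ 2) := Real.sqrt_le_sqrt hsq
      _ = lam * ‖x‖ := Real.sqrt_sq (by positivity)
  have hup : opNorm M ≤ lam := ContinuousLinearMap.opNorm_le_bound _ hlam.le hbound
  -- lower bound
  have ht₁ : 0 < P₁.trace.re := trace_re_pos hP₁ hP₁0
  have ht₂ : 0 < P₂.trace.re := trace_re_pos hP₂ hP₂0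
  have hlow : ∀ d : n → ℝ, lam ≤ opNorm (M + Matrix.diagonal fun i => (d i : ℂ)) := by
    intro d
    set D : Matrix n n ℂ := Matrix.diagonal fun i => (d i : ℂ) with hD_def
    set A : Matrix n n ℂ := M + D with hA_def
    have htrD : (D * P₁).trace = (D * P₂).trace := by
      rw [hD_def]
      simp only [Matrix.trace, Matrix.diag, Matrix.diagonal_mul]
      exact Finset.sum_congr rfl fun i _ => by rw [hcomp₂ i]
    have key : (A * P₁).trace - (A * P₂).trace = (lam : ℂ) * (P₁.trace + P₂.trace) := by
      have e₁ : (A * P₁).trace = (lam : ℂ) * P₁.trace + (D * P₁).trace := by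
        rw [hA_def, Matrix.add_mul, Matrix.trace_add, hMP₁, Matrix.trace_smul, smul_eq_mul]
      have e₂ : (A * P₂).trace = -(lam : ℂ) * P₂.trace + (D * P₂).trace := by
        rw [hA_def, Matrix.add_mul, Matrix.trace_add, hMP₂, Matrix.trace_smul, smul_eq_mul]
      rw [e₁, e₂, htrD]
      ring
    have hre : lam * (P₁.trace.re + P₂.trace.re)
        = ((A * P₁).trace).re - ((A * P₂).trace).re := by
      have h := congrArg Complex.re key
      rw [Complex.sub_re, Complex.re_ofReal_mul, Complex.add_re] at h
      linarith
    have hb₁ := abs_trace_mul_le A P₁ hP₁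
    have hb₂ := abs_trace_mul_le A P₂ hP₂
    have habs₁ := Complex.re_le_norm ((A * P₁).trace)
    have habs₂ := (abs_le.mp (Complex.abs_re_le_norm ((A * P₂).trace))).1
    have hsum : lam * (P₁.trace.re + P₂.trace.re)
        ≤ opNorm A * (P₁.trace.re + P₂.trace.re) := by
      calc lam * (P₁.trace.re + P₂.trace.re)
          = ((A * P₁).trace).re - ((A * P₂).trace).re := hre
        _ ≤ ‖(A * P₁).trace‖ + ‖(A * P₂).trace‖ := by linarith
        _ ≤ opNorm A * P₁.trace.re + opNorm A * P₂.trace.re := add_le_add hb₁ hb₂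
        _ = opNorm A * (P₁.trace.re + P₂.trace.re) := by ring
    exact le_of_mul_le_mul_right (by simpa [mul_comm] using hsum) (by linarith)
  have heq : opNorm M = lam := by
    refine le_antisymm hup ?_
    have := hlow 0
    simpa using this
  refine ⟨fun d => ?_, heq⟩
  rw [heq]
  exact hlow d
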